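/- Let θ ∈ ℝ with sin θ ≠ 0 and let R_θ = [[cos θ, -sin θ],[sin θ, cos θ]] ∈ SL(2,ℝ). Then the conjugation orbit map g ↦ g · R_θ · g⁻¹ from SL(2,ℝ) to SL(2,ℝ) is a proper map (the preimage of every compact subset of SL(2,ℝ) is compact). In particular, SL(2,ℝ) acts properly by conjugation on the conjugacy class of R_θ. -/

import Mathlib

/-- `SL(2,ℝ)` carries the topology induced from the matrix entries. -/
instance : TopologicalSpace (Matrix.SpecialLinearGroup (Fin 2) ℝ) :=
  TopologicalSpace.induced
    ((↑) : Matrix.SpecialLinearGroup (Fin 2) ℝ → Matrix (Fin 2) (Fin 2) ℝ) inferInstance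

/-- The rotation matrix `R_θ = [[cos θ, -sin θ],[sin θ, cos θ]]` as an element of
`SL(2,ℝ)`. -/
noncomputable def rotSL (θ : ℝ) : Matrix.SpecialLinearGroup (Fin 2) ℝ :=
  ⟨!![Real.cos θ, -Real.sin θ; Real.sin θ, Real.cos θ], by
    rw [Matrix.det_fin_two_of]; nlinarith [Real.sin_sq_add_cos_sq θ]⟩

open Matrix Topology

private lemma continuous_coeSL :
    Continuous ((↑) : Matrix.SpecialLinearGroup (Fin 2) ℝ → Matrix (Fin 2) (Fin 2) ℝ) :=
  continuous_induced_dom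

private lemma isClosedEmbedding_coeSL :
    Topology.IsClosedEmbedding
      ((↑) : Matrix.SpecialLinearGroup (Fin 2) ℝ → Matrix (Fin 2) (Fin 2) ℝ) := by
  refine ⟨⟨⟨rfl⟩, fun a b h => Subtype.ext h⟩, ?_⟩
  have : Set.range ((↑) : Matrix.SpecialLinearGroup (Fin 2) ℝ → Matrix (Fin 2) (Fin 2) ℝ)
      = (Matrix.det) ⁻¹' {1} := by
    ext A
    constructor
    · rintro ⟨g, rfl⟩; exact g.2
    · intro hA; exact ⟨⟨A, hA⟩, rfl⟩
  rw [this]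
  exact isClosed_singleton.preimage continuous_id.matrix_det

instance : T2Space (Matrix.SpecialLinearGroup (Fin 2) ℝ) :=
  isClosedEmbedding_coeSL.toIsEmbedding.t2Space

private lemma coe_conj (θ : ℝ) (g : Matrix.SpecialLinearGroup (Fin 2) ℝ) :
    ((g * rotSL θ * g⁻¹ : Matrix.SpecialLinearGroup (Fin 2) ℝ) : Matrix (Fin 2) (Fin 2) ℝ)
      = (g : Matrix (Fin 2) (Fin 2) ℝ) * (rotSL θ : Matrix (Fin 2) (Fin 2) ℝ)
        * Matrix.adjugate (g : Matrix (Fin 2) (Fin 2) ℝ) := by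
  simp [Matrix.SpecialLinearGroup.coe_mul, Matrix.SpecialLinearGroup.coe_inv]

private lemma key_entry (θ : ℝ) (g : Matrix.SpecialLinearGroup (Fin 2) ℝ) :
    ((g * rotSL θ * g⁻¹ : Matrix.SpecialLinearGroup (Fin 2) ℝ) : Matrix (Fin 2) (Fin 2) ℝ) 1 0
    - ((g * rotSL θ * g⁻¹ : Matrix.SpecialLinearGroup (Fin 2) ℝ) : Matrix (Fin 2) (Fin 2) ℝ) 0 1
    = Real.sin θ * (((g : Matrix (Fin 2) (Fin 2) ℝ) 0 0) ^ 2
        + ((g : Matrix (Fin 2) (Fin 2) ℝ) 0 1) ^ 2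
        + ((g : Matrix (Fin 2) (Fin 2) ℝ) 1 0) ^ 2
        + ((g : Matrix (Fin 2) (Fin 2) ℝ) 1 1) ^ 2) := by
  rw [coe_conj]
  set A := (g : Matrix (Fin 2) (Fin 2) ℝ)
  simp [rotSL, Matrix.adjugate_fin_two, Matrix.mul_apply, Fin.sum_univ_two]
  ring

/-- For `θ` with `sin θ ≠ 0`, the conjugation orbit map
`g ↦ g · R_θ · g⁻¹` on `SL(2,ℝ)` is a proper map: it is continuous and the preimage of
every compact subset of `SL(2,ℝ)` is compact. -/
theorem conjugation_orbit_map_proper_SL2R (θ : ℝ) (hθ : Real.sin θ ≠ 0) :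
    Continuous (fun g : Matrix.SpecialLinearGroup (Fin 2) ℝ => g * rotSL θ * g⁻¹) ∧
    ∀ K : Set (Matrix.SpecialLinearGroup (Fin 2) ℝ), IsCompact K →
      IsCompact ((fun g : Matrix.SpecialLinearGroup (Fin 2) ℝ => g * rotSL θ * g⁻¹) ⁻¹' K) := by
  have hfc : Continuous (fun g : Matrix.SpecialLinearGroup (Fin 2) ℝ => g * rotSL θ * g⁻¹) := by
    apply continuous_induced_rng.2
    have heq : (((↑) : Matrix.SpecialLinearGroup (Fin 2) ℝ → Matrix (Fin 2) (Fin 2) ℝ) ∘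
        fun g : Matrix.SpecialLinearGroup (Fin 2) ℝ => g * rotSL θ * g⁻¹)
        = fun g : Matrix.SpecialLinearGroup (Fin 2) ℝ =>
          (g : Matrix (Fin 2) (Fin 2) ℝ) * (rotSL θ : Matrix (Fin 2) (Fin 2) ℝ)
            * Matrix.adjugate (g : Matrix (Fin 2) (Fin 2) ℝ) := by
      funext g; exact coe_conj θ g
    have hc : Continuous fun g : Matrix.SpecialLinearGroup (Fin 2) ℝ =>
        (g : Matrix (Fin 2) (Fin 2) ℝ) * (rotSL θ : Matrix (Fin 2) (Fin 2) ℝ)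
          * Matrix.adjugate (g : Matrix (Fin 2) (Fin 2) ℝ) :=
      (continuous_coeSL.matrix_mul continuous_const).matrix_mul
        continuous_coeSL.matrix_adjugate
    rw [← heq] at hc
    exact hc
  refine ⟨hfc, fun K hK => ?_⟩
  set f := fun g : Matrix.SpecialLinearGroup (Fin 2) ℝ => g * rotSL θ * g⁻¹ with hf
  -- bound on the sum of squares of entries over the preimage
  have hφc : Continuous fun A : Matrix (Fin 2) (Fin 2) ℝ => (A 1 0 - A 0 1) / Real.sin θ :=
    ((continuous_id.matrix_elem 1 0).sub (continuous_id.matrix_elem 0 1)).div_const _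
  obtain ⟨C, hC⟩ : ∃ C, ∀ m ∈ K,
      (((m : Matrix (Fin 2) (Fin 2) ℝ) 1 0 - (m : Matrix (Fin 2) (Fin 2) ℝ) 0 1)
        / Real.sin θ) ≤ C := by
    obtain ⟨C, hC⟩ := ((hK.image continuous_coeSL).image hφc).bddAbove
    exact ⟨C, fun m hm => hC ⟨_, ⟨_, hm, rfl⟩, rfl⟩⟩
  have hsum : ∀ g ∈ f ⁻¹' K,
      ((g : Matrix (Fin 2) (Fin 2) ℝ) 0 0) ^ 2 + ((g : Matrix (Fin 2) (Fin 2) ℝ) 0 1) ^ 2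
        + ((g : Matrix (Fin 2) (Fin 2) ℝ) 1 0) ^ 2 + ((g : Matrix (Fin 2) (Fin 2) ℝ) 1 1) ^ 2
        ≤ C := by
    intro g hg
    have h1 := hC (f g) hg
    rw [hf] at h1
    rw [key_entry θ g] at h1
    rwa [mul_comm, mul_div_assoc, div_self hθ, mul_one] at h1
  have hentry : ∀ g ∈ f ⁻¹' K, ∀ i j, (g : Matrix (Fin 2) (Fin 2) ℝ) i j ∈
      Set.Icc (-(Real.sqrt C)) (Real.sqrt C) := by
    intro g hg i j
    have hsq : ((g : Matrix (Fin 2) (Fin 2) ℝ) i j) ^ 2 ≤ C := by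
      have := hsum g hg
      fin_cases i <;> fin_cases j <;> simp only [Fin.zero_eta, Fin.mk_one, Fin.isValue] <;> nlinarith [sq_nonneg ((g : Matrix (Fin 2) (Fin 2) ℝ) 0 0),
        sq_nonneg ((g : Matrix (Fin 2) (Fin 2) ℝ) 0 1),
        sq_nonneg ((g : Matrix (Fin 2) (Fin 2) ℝ) 1 0),
        sq_nonneg ((g : Matrix (Fin 2) (Fin 2) ℝ) 1 1)]
    have habs : |(g : Matrix (Fin 2) (Fin 2) ℝ) i j| ≤ Real.sqrt C := by
      rw [← Real.sqrt_sq_eq_abs]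
      exact Real.sqrt_le_sqrt hsq
    exact abs_le.1 habs
  -- the compact box
  have hTbox : IsCompact ((Set.univ.pi fun _ : Fin 2 => Set.univ.pi fun _ : Fin 2 =>
      Set.Icc (-(Real.sqrt C)) (Real.sqrt C)) : Set (Matrix (Fin 2) (Fin 2) ℝ)) :=
    isCompact_univ_pi fun _ => isCompact_univ_pi fun _ => isCompact_Icc
  have hTcomp : IsCompact (((↑) : Matrix.SpecialLinearGroup (Fin 2) ℝ →
        Matrix (Fin 2) (Fin 2) ℝ) ⁻¹' (Set.univ.pi fun _ : Fin 2 => Set.univ.pi fun _ : Fin 2 =>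
      Set.Icc (-(Real.sqrt C)) (Real.sqrt C))) :=
    isClosedEmbedding_coeSL.isProperMap.isCompact_preimage hTbox
  refine hTcomp.of_isClosed_subset (hK.isClosed.preimage hfc) ?_
  intro g hg
  show ∀ i ∈ Set.univ, ∀ j ∈ Set.univ,
    (g : Matrix (Fin 2) (Fin 2) ℝ) i j ∈ Set.Icc (-(Real.sqrt C)) (Real.sqrt C)
  intro i _ j _
  exact hentry g hg i j
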